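/- Let m > 4 and let k ≥ l ≥ 0 be integers. Then for every H ∈ ℋ_{k,l}, the (k−l+1)-fold iterate of the operator S_u annihilates H: S_u^{k−l+1} H = 0. Moreover, for every integer 0 ≤ j ≤ k−l there exists H ∈ ℋ_{k,l} with S_u^{j} H ≠ 0. -/

import Mathlib

open MvPolynomial

noncomputable section

/-- Polynomials in two vector variables `x = (x_1,…,x_m)` (the `Sum.inl` variables)
and `u = (u_1,…,u_m)` (the `Sum.inr` variables), with complex coefficients. -/
abbrev PP (m : ℕ) := MvPolynomial (Fin m ⊕ Fin m) ℂ

/-- The Laplace operator `Δ_x` in the `x`-variables. -/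
def lapX (m : ℕ) (P : PP m) : PP m :=
  ∑ j : Fin m, pderiv (Sum.inl j) (pderiv (Sum.inl j) P)

/-- The Laplace operator `Δ_u` in the `u`-variables. -/
def lapU (m : ℕ) (P : PP m) : PP m :=
  ∑ j : Fin m, pderiv (Sum.inr j) (pderiv (Sum.inr j) P)

/-- The mixed operator `⟨∂_u,∂_x⟩ = Σ_j ∂_{u_j} ∂_{x_j}`. -/
def dudx (m : ℕ) (P : PP m) : PP m :=
  ∑ j : Fin m, pderiv (Sum.inr j) (pderiv (Sum.inl j) P)

/-- The operator `⟨x,∂_u⟩ = Σ_j x_j ∂_{u_j}`. -/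
def xdu (m : ℕ) (P : PP m) : PP m :=
  ∑ j : Fin m, X (Sum.inl j) * pderiv (Sum.inr j) P

/-- The operator `⟨u,∂_x⟩ = Σ_j u_j ∂_{x_j}`. -/
def udx (m : ℕ) (P : PP m) : PP m :=
  ∑ j : Fin m, X (Sum.inr j) * pderiv (Sum.inl j) P

/-- The polynomial `|x|² = Σ_j x_j²`. -/
def nx2 (m : ℕ) : PP m := ∑ j : Fin m, X (Sum.inl j) ^ 2

/-- The polynomial `|u|² = Σ_j u_j²`. -/
def nu2 (m : ℕ) : PP m := ∑ j : Fin m, X (Sum.inr j) ^ 2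

/-- The polynomial `⟨u,x⟩ = Σ_j u_j x_j`. -/
def uxP (m : ℕ) : PP m := ∑ j : Fin m, X (Sum.inr j) * X (Sum.inl j)

/-- `P` is homogeneous of degree `p` in the `x`-variables and `q` in the `u`-variables. -/
def IsBihom (m p q : ℕ) (P : PP m) : Prop :=
  P.IsWeightedHomogeneous (Sum.elim (fun _ => 1) (fun _ => 0)) p ∧
  P.IsWeightedHomogeneous (Sum.elim (fun _ => 0) (fun _ => 1)) q

/-- `P` belongs to the space `ℋ_{k,l}` of simplicial harmonics. -/
def IsSimp (m k l : ℕ) (P : PP m) : Prop :=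
  IsBihom m k l P ∧ lapX m P = 0 ∧ lapU m P = 0 ∧ dudx m P = 0 ∧ xdu m P = 0

/-- The transvector generator `S_x` taken on bidegree `(p,·)`. -/
def opSx (m : ℕ) (p : ℤ) (P : PP m) : PP m :=
  xdu m P - (2 * (p : ℂ) + m - 2)⁻¹ • (nx2 m * dudx m P)

/-- The transvector generator `S_u` taken on bidegree `(·,q)`. -/
def opSu (m : ℕ) (q : ℤ) (P : PP m) : PP m :=
  udx m P - (2 * (q : ℂ) + m - 2)⁻¹ • (nu2 m * dudx m P)

/-- The transvector generator `A = ⟨∂_u,∂_x⟩`. -/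
def opA (m : ℕ) (P : PP m) : PP m := dudx m P

/-- The transvector generator `C` taken on bidegree `(p,q)`. -/
def opC (m : ℕ) (p q : ℤ) (P : PP m) : PP m :=
  uxP m * P - (2 * (p : ℂ) + m - 2)⁻¹ • (nx2 m * udx m P)
    - (2 * (q : ℂ) + m - 2)⁻¹ • (nu2 m * xdu m P)
    + ((2 * (p : ℂ) + m - 2) * (2 * (q : ℂ) + m - 2))⁻¹ • (nx2 m * (nu2 m * dudx m P))

/-- `SuIter m n q P`: apply `S_u` `n` times to `P`, starting at `u`-degree `q`
(each application raises the `u`-degree by one). -/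
def SuIter (m : ℕ) : ℕ → ℤ → PP m → PP m
  | 0, _, P => P
  | n+1, q, P => SuIter m n (q+1) (opSu m q P)

/-- `SxIter m n p P`: apply `S_x` `n` times to `P`, starting at `x`-degree `p`
(each application raises the `x`-degree by one). -/
def SxIter (m : ℕ) : ℕ → ℤ → PP m → PP m
  | 0, _, P => P
  | n+1, p, P => SxIter m n (p+1) (opSx m p P)

/-- `CIter m n p q P`: apply `C` `n` times to `P`, starting at bidegree `(p,q)`. -/
def CIter (m : ℕ) : ℕ → ℤ → ℤ → PP m → PP m
  | 0, _, _, P => P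
  | n+1, p, q, P => CIter m n (p+1) (q+1) (opC m p q P)

/-- `AIter m n P`: apply `A` `n` times to `P`. -/
def AIter (m : ℕ) (n : ℕ) (P : PP m) : PP m := (opA m)^[n] P

/-- The rising factorial `a^{(n)} = a(a+1)⋯(a+n-1)`. -/
def asc (a : ℂ) : ℕ → ℂ
  | 0 => 1
  | n+1 => asc a n * (a + n)

/-- The falling factorial `a_{(n)} = a(a-1)⋯(a-n+1)`. -/
def desc (a : ℂ) : ℕ → ℂ
  | 0 => 1
  | n+1 => desc a n * (a - n)

set_option linter.unusedSectionVars false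

namespace Aux
open MvPolynomial

variable {m : ℕ}

/-- weight function for x-degree -/
abbrev wX (m : ℕ) : Fin m ⊕ Fin m → ℕ := Sum.elim (fun _ => 1) (fun _ => 0)
abbrev wU (m : ℕ) : Fin m ⊕ Fin m → ℕ := Sum.elim (fun _ => 0) (fun _ => 1)

lemma pd_comm (i j : Fin m ⊕ Fin m) (P : PP m) :
    pderiv i (pderiv j P) = pderiv j (pderiv i P) := by
  induction P using MvPolynomial.induction_on' with
  | monomial d c =>
    simp only [pderiv_monomial]
    rcases eq_or_ne i j with rfl | hij
    · rfl
    · have h1 : d - Finsupp.single j 1 - Finsupp.single i 1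
          = d - Finsupp.single i 1 - Finsupp.single j 1 := by
        ext s; simp [Finsupp.single_apply]; omega
      have h2 : (d - Finsupp.single j 1 : (Fin m ⊕ Fin m) →₀ ℕ) i = d i := by
        rw [Finsupp.tsub_apply _ _ _]; simp [Finsupp.single_apply, (Ne.symm hij)]
      have h3 : (d - Finsupp.single i 1 : (Fin m ⊕ Fin m) →₀ ℕ) j = d j := by
        rw [Finsupp.tsub_apply _ _ _]; simp [Finsupp.single_apply, hij]
      rw [h1, h2, h3]; ring_nf
  | add p q hp hq => simp [map_add, hp, hq]

lemma weight_single (w : Fin m ⊕ Fin m → ℕ) (i : Fin m ⊕ Fin m) :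
    Finsupp.weight w (Finsupp.single i 1) = w i := by
  rw [Finsupp.weight_apply, Finsupp.sum_single_index] <;> simp

lemma weight_wX (d : Fin m ⊕ Fin m →₀ ℕ) :
    Finsupp.weight (wX m) d = ∑ j : Fin m, d (Sum.inl j) := by
  rw [Finsupp.weight_apply, Finsupp.sum_fintype]
  · rw [Fintype.sum_sum_type]; simp
  · intro i; simp

lemma weight_wU (d : Fin m ⊕ Fin m →₀ ℕ) :
    Finsupp.weight (wU m) d = ∑ j : Fin m, d (Sum.inr j) := by
  rw [Finsupp.weight_apply, Finsupp.sum_fintype]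
  · rw [Fintype.sum_sum_type]; simp
  · intro i; simp

lemma X_mul_pderiv_monomial (i : Fin m ⊕ Fin m) (d : Fin m ⊕ Fin m →₀ ℕ) (c : ℂ) :
    X i * pderiv i (monomial d c) = monomial d ((d i : ℂ) * c) := by
  rw [pderiv_monomial]
  rcases Nat.eq_zero_or_pos (d i) with h | h
  · simp [h]
  · rw [X, monomial_mul]
    have he : Finsupp.single i 1 + (d - Finsupp.single i 1) = d := by
      ext s
      rw [Finsupp.add_apply, Finsupp.tsub_apply _ _ _]
      rcases eq_or_ne s i with rfl | hs
      · simp [Finsupp.single_apply]; omega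
      · simp [Finsupp.single_apply, (Ne.symm hs)]
    rw [he]
    congr 1
    ring

lemma hom_pderiv {w : Fin m ⊕ Fin m → ℕ} {n : ℕ} {P : PP m} (i : Fin m ⊕ Fin m)
    (h : P.IsWeightedHomogeneous w n) :
    (pderiv i P).IsWeightedHomogeneous w (n - w i) := by
  conv_lhs => rw [P.as_sum]
  rw [map_sum]
  apply IsWeightedHomogeneous.sum
  intro d hd
  rw [pderiv_monomial]
  rcases Nat.eq_zero_or_pos (d i) with h0 | h0
  · simp only [h0, Nat.cast_zero, mul_zero, map_zero]
    exact isWeightedHomogeneous_zero _ _ _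
  · apply isWeightedHomogeneous_monomial
    have hw : Finsupp.weight w d = n := h (mem_support_iff.mp hd)
    have key : Finsupp.weight w (d - Finsupp.single i 1) + w i = n := by
      rw [← hw, ← weight_single w i, ← map_add]
      congr 1
      ext s
      rw [Finsupp.add_apply, Finsupp.tsub_apply _ _ _]
      rcases eq_or_ne s i with rfl | hs
      · simp [Finsupp.single_apply]; omega
      · simp [Finsupp.single_apply, (Ne.symm hs)]
    omega

lemma pderiv_eq_zero_of_x0 {P : PP m} (h : P.IsWeightedHomogeneous (wX m) 0) (j : Fin m) :
    pderiv (Sum.inl j) P = 0 := by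
  conv_lhs => rw [P.as_sum]
  rw [map_sum]
  apply Finset.sum_eq_zero
  intro d hd
  have hw := h (mem_support_iff.mp hd)
  rw [weight_wX] at hw
  have : d (Sum.inl j) = 0 := by
    have := Finset.sum_eq_zero_iff.mp hw j (Finset.mem_univ j)
    exact this
  rw [pderiv_monomial, this]
  simp

lemma euler_gen (w : Fin m ⊕ Fin m → ℕ) (emb : Fin m → Fin m ⊕ Fin m)
    (hw : ∀ d : Fin m ⊕ Fin m →₀ ℕ, Finsupp.weight w d = ∑ j : Fin m, d (emb j))
    {p : ℕ} {P : PP m} (h : P.IsWeightedHomogeneous w p) :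
    ∑ j : Fin m, X (emb j) * pderiv (emb j) P = (p : ℂ) • P := by
  conv_lhs => rw [P.as_sum]
  conv_rhs => rw [P.as_sum]
  rw [Finset.smul_sum]
  have : ∀ j : Fin m, X (emb j) * pderiv (emb j) (∑ d ∈ P.support, monomial d (coeff d P))
      = ∑ d ∈ P.support, monomial d ((d (emb j) : ℂ) * coeff d P) := by
    intro j
    rw [map_sum, Finset.mul_sum]
    exact Finset.sum_congr rfl fun d _ => X_mul_pderiv_monomial _ _ _
  rw [Finset.sum_congr rfl fun j _ => this j, Finset.sum_comm]
  refine Finset.sum_congr rfl fun d hd => ?_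
  rw [← map_sum, ← Finset.sum_mul, smul_monomial]
  congr 1
  have hwd := h (mem_support_iff.mp hd)
  rw [hw d] at hwd
  rw [← Nat.cast_sum, hwd]
  simp [smul_eq_mul]

lemma euler_x {p : ℕ} {P : PP m} (h : P.IsWeightedHomogeneous (wX m) p) :
    ∑ j : Fin m, X (Sum.inl j) * pderiv (Sum.inl j) P = (p : ℂ) • P :=
  euler_gen (wX m) Sum.inl weight_wX h

lemma euler_u {q : ℕ} {P : PP m} (h : P.IsWeightedHomogeneous (wU m) q) :
    ∑ j : Fin m, X (Sum.inr j) * pderiv (Sum.inr j) P = (q : ℂ) • P :=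
  euler_gen (wU m) Sum.inr weight_wU h


/-- number operator in x -/
def opNx (m : ℕ) (P : PP m) : PP m := ∑ j : Fin m, X (Sum.inl j) * pderiv (Sum.inl j) P
def opNu (m : ℕ) (P : PP m) : PP m := ∑ j : Fin m, X (Sum.inr j) * pderiv (Sum.inr j) P

lemma udx_smul (c : ℂ) (P : PP m) : udx m (c • P) = c • udx m P := by
  unfold udx
  rw [Finset.smul_sum]
  refine Finset.sum_congr rfl fun j _ => ?_
  rw [(pderiv (Sum.inl j)).map_smul, mul_smul_comm]

lemma udx_zero : udx m 0 = 0 := by simp [udx]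
lemma xdu_zero : xdu m 0 = 0 := by simp [xdu]

lemma xdu_smul (c : ℂ) (P : PP m) : xdu m (c • P) = c • xdu m P := by
  unfold xdu
  rw [Finset.smul_sum]
  refine Finset.sum_congr rfl fun j _ => ?_
  rw [(pderiv (Sum.inr j)).map_smul, mul_smul_comm]

lemma pd_inl_X_inr (i j : Fin m) : pderiv (Sum.inl i) (X (Sum.inr j) : PP m) = 0 :=
  pderiv_X_of_ne (by simp)

lemma pd_inr_X_inl (i j : Fin m) : pderiv (Sum.inr i) (X (Sum.inl j) : PP m) = 0 :=
  pderiv_X_of_ne (by simp)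

lemma comm_F_E (P : PP m) :
    xdu m (udx m P) = udx m (xdu m P) + opNx m P - opNu m P := by
  have e1 : xdu m (udx m P) = opNx m P + ∑ i : Fin m, ∑ j : Fin m,
      X (Sum.inl i) * (X (Sum.inr j) * pderiv (Sum.inr i) (pderiv (Sum.inl j) P)) := by
    unfold xdu udx opNx
    rw [← Finset.sum_add_distrib]
    refine Finset.sum_congr rfl fun i _ => ?_
    rw [map_sum]
    have : ∀ j : Fin m, pderiv (Sum.inr i) (X (Sum.inr j) * pderiv (Sum.inl j) P)
        = (if j = i then pderiv (Sum.inl j) P else 0)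
          + X (Sum.inr j) * pderiv (Sum.inr i) (pderiv (Sum.inl j) P) := by
      intro j
      rw [pderiv_mul]
      congr 1
      rcases eq_or_ne j i with rfl | hj
      · simp
      · rw [pderiv_X_of_ne (fun h => hj (Sum.inr.inj h))]
        simp [hj]
    rw [Finset.sum_congr rfl fun j _ => this j, Finset.sum_add_distrib,
      Finset.sum_ite_eq' Finset.univ i]
    simp [Finset.mul_sum, mul_add]
  have e2 : udx m (xdu m P) = opNu m P + ∑ i : Fin m, ∑ j : Fin m,
      X (Sum.inl i) * (X (Sum.inr j) * pderiv (Sum.inr i) (pderiv (Sum.inl j) P)) := by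
    have inner : ∀ j : Fin m, pderiv (Sum.inl j) (∑ i : Fin m, X (Sum.inl i) * pderiv (Sum.inr i) P)
        = pderiv (Sum.inr j) P + ∑ i : Fin m, X (Sum.inl i) * pderiv (Sum.inl j) (pderiv (Sum.inr i) P) := by
      intro j
      rw [map_sum]
      have : ∀ i : Fin m, pderiv (Sum.inl j) (X (Sum.inl i) * pderiv (Sum.inr i) P)
          = (if i = j then pderiv (Sum.inr i) P else 0)
            + X (Sum.inl i) * pderiv (Sum.inl j) (pderiv (Sum.inr i) P) := by
        intro i
        rw [pderiv_mul]
        congr 1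
        rcases eq_or_ne i j with rfl | hi
        · simp
        · rw [pderiv_X_of_ne (fun h => hi (Sum.inl.inj h))]
          simp [hi]
      rw [Finset.sum_congr rfl fun i _ => this i, Finset.sum_add_distrib,
        Finset.sum_ite_eq' Finset.univ j]
      simp
    have step1 : udx m (xdu m P) = opNu m P + ∑ j : Fin m, ∑ i : Fin m,
        X (Sum.inr j) * (X (Sum.inl i) * pderiv (Sum.inl j) (pderiv (Sum.inr i) P)) := by
      unfold udx xdu opNu
      rw [Finset.sum_congr rfl fun j _ => by rw [inner j]]
      simp [mul_add, Finset.mul_sum, Finset.sum_add_distrib]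
    rw [step1, Finset.sum_comm]
    refine congrArg (opNu m P + ·) ?_
    refine Finset.sum_congr rfl fun i _ => Finset.sum_congr rfl fun j _ => ?_
    rw [pd_comm]
    ring
  rw [e1, e2]
  abel

lemma pd_inl_mulXinr (i j : Fin m) (Q : PP m) :
    pderiv (Sum.inl i) (X (Sum.inr j) * Q) = X (Sum.inr j) * pderiv (Sum.inl i) Q := by
  rw [pderiv_mul, pd_inl_X_inr]; ring

lemma pd_inr_mulXinr (i j : Fin m) (Q : PP m) :
    pderiv (Sum.inr i) (X (Sum.inr j) * Q)
      = (if j = i then Q else 0) + X (Sum.inr j) * pderiv (Sum.inr i) Q := by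
  rw [pderiv_mul]
  congr 1
  rcases eq_or_ne j i with rfl | hj
  · simp
  · rw [pderiv_X_of_ne (fun h => hj (Sum.inr.inj h))]
    simp [hj]

lemma comm_A_E (P : PP m) :
    dudx m (udx m P) = udx m (dudx m P) + lapX m P := by
  have e1 : dudx m (udx m P) = lapX m P + ∑ i : Fin m, ∑ j : Fin m,
      X (Sum.inr j) * pderiv (Sum.inr i) (pderiv (Sum.inl i) (pderiv (Sum.inl j) P)) := by
    unfold dudx udx lapX
    rw [← Finset.sum_add_distrib]
    refine Finset.sum_congr rfl fun i _ => ?_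
    have inner1 : pderiv (Sum.inl i) (∑ j : Fin m, X (Sum.inr j) * pderiv (Sum.inl j) P)
        = ∑ j : Fin m, X (Sum.inr j) * pderiv (Sum.inl i) (pderiv (Sum.inl j) P) := by
      rw [map_sum]
      exact Finset.sum_congr rfl fun j _ => pd_inl_mulXinr i j _
    rw [inner1, map_sum]
    rw [Finset.sum_congr rfl fun j _ => pd_inr_mulXinr i j _, Finset.sum_add_distrib,
      Finset.sum_ite_eq' Finset.univ i]
    simp only [Finset.mem_univ, if_true]
  have e2 : udx m (dudx m P) = ∑ j : Fin m, ∑ i : Fin m,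
      X (Sum.inr j) * pderiv (Sum.inr i) (pderiv (Sum.inl i) (pderiv (Sum.inl j) P)) := by
    unfold udx dudx
    refine Finset.sum_congr rfl fun j _ => ?_
    rw [map_sum, Finset.mul_sum]
    refine Finset.sum_congr rfl fun i _ => ?_
    rw [pd_comm (Sum.inl j) (Sum.inr i), pd_comm (Sum.inl j) (Sum.inl i)]
  rw [e1, e2, Finset.sum_comm]
  ring

lemma comm_Lx_E (P : PP m) :
    lapX m (udx m P) = udx m (lapX m P) := by
  have e1 : lapX m (udx m P) = ∑ i : Fin m, ∑ j : Fin m,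
      X (Sum.inr j) * pderiv (Sum.inl i) (pderiv (Sum.inl i) (pderiv (Sum.inl j) P)) := by
    unfold lapX udx
    refine Finset.sum_congr rfl fun i _ => ?_
    rw [map_sum, Finset.sum_congr rfl fun j _ => pd_inl_mulXinr i j _, map_sum]
    exact Finset.sum_congr rfl fun j _ => pd_inl_mulXinr i j _
  have e2 : udx m (lapX m P) = ∑ j : Fin m, ∑ i : Fin m,
      X (Sum.inr j) * pderiv (Sum.inl i) (pderiv (Sum.inl i) (pderiv (Sum.inl j) P)) := by
    unfold udx lapX
    refine Finset.sum_congr rfl fun j _ => ?_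
    rw [map_sum, Finset.mul_sum]
    refine Finset.sum_congr rfl fun i _ => ?_
    rw [pd_comm (Sum.inl j) (Sum.inl i), pd_comm (Sum.inl j) (Sum.inl i)]
  rw [e1, e2, Finset.sum_comm]

lemma opNx_zero : opNx m 0 = 0 := by simp [opNx]
lemma opNu_zero : opNu m 0 = 0 := by simp [opNu]

lemma bihom_udx {p q : ℕ} {P : PP m} (h : IsBihom m (p+1) q P) :
    IsBihom m p (q+1) (udx m P) := by
  obtain ⟨h1, h2⟩ := h
  constructor
  · apply IsWeightedHomogeneous.sum
    intro j _
    have hx : ((pderiv (Sum.inl j)) P).IsWeightedHomogeneous (wX m) p := by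
      simpa using hom_pderiv (w := wX m) (Sum.inl j) h1
    have hX : (X (Sum.inr j) : PP m).IsWeightedHomogeneous (wX m) 0 := by
      simpa using isWeightedHomogeneous_X ℂ (wX m) (Sum.inr j)
    simpa using hX.mul hx
  · apply IsWeightedHomogeneous.sum
    intro j _
    have hx : ((pderiv (Sum.inl j)) P).IsWeightedHomogeneous (wU m) q := by
      simpa using hom_pderiv (w := wU m) (Sum.inl j) h2
    have hX : (X (Sum.inr j) : PP m).IsWeightedHomogeneous (wU m) 1 := by
      simpa using isWeightedHomogeneous_X ℂ (wU m) (Sum.inr j)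
    simpa [add_comm] using hX.mul hx

lemma udx_zero_of_x0 {P : PP m} (h : P.IsWeightedHomogeneous (wX m) 0) :
    udx m P = 0 := by
  unfold udx
  apply Finset.sum_eq_zero
  intro j _
  rw [pderiv_eq_zero_of_x0 h j, mul_zero]

lemma iter_bihom {k l : ℕ} {H : PP m} (hb : IsBihom m k l H) :
    ∀ n, IsBihom m (k - n) (l + n) ((udx m)^[n] H) ∧
      (k < n → (udx m)^[n] H = 0) := by
  intro n
  induction n with
  | zero => exact ⟨by simpa using hb, by omega⟩
  | succ n ih =>
    obtain ⟨ih1, ih2⟩ := ih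
    rcases le_or_gt k n with hkn | hnk
    · have h0 : k - n = 0 := by omega
      rw [h0] at ih1
      have hz : (udx m)^[n+1] H = 0 := by
        rw [Function.iterate_succ_apply', udx_zero_of_x0 ih1.1]
      refine ⟨?_, fun _ => hz⟩
      rw [hz]
      exact ⟨isWeightedHomogeneous_zero _ _ _, isWeightedHomogeneous_zero _ _ _⟩
    · have h1 : k - n = (k - (n+1)) + 1 := by omega
      rw [h1] at ih1
      have this2 := bihom_udx ih1
      refine ⟨?_, fun h => by omega⟩
      rw [Function.iterate_succ_apply']
      have h2 : l + n + 1 = l + (n + 1) := by omega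
      rwa [h2] at this2

lemma FEn {k l : ℕ} {H : PP m} (hb : IsBihom m k l H) (hF : xdu m H = 0) :
    ∀ n : ℕ, xdu m ((udx m)^[n+1] H)
      = (((n : ℂ) + 1) * ((k : ℂ) - (l : ℂ) - (n : ℂ))) • (udx m)^[n] H := by
  intro n
  induction n with
  | zero =>
    rw [Function.iterate_one, Function.iterate_zero_apply]
    rw [comm_F_E, hF, udx_zero, zero_add]
    have ex : opNx m H = (k : ℂ) • H := euler_x hb.1
    have eu : opNu m H = (l : ℂ) • H := euler_u hb.2
    rw [ex, eu]
    rw [← sub_smul]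
    congr 1
    ring
  | succ n ih =>
    rw [show n+1+1 = (n+1)+1 from rfl, Function.iterate_succ_apply' (udx m) (n+1) H]
    rw [comm_F_E ((udx m)^[n+1] H), ih, udx_smul]
    rw [← Function.iterate_succ_apply' (udx m) n H]
    by_cases h0 : (udx m)^[n+1] H = 0
    · rw [h0, opNx_zero, opNu_zero, smul_zero, smul_zero]
      simp
    · have hn1k : n + 1 ≤ k := by
        by_contra hc
        exact h0 ((iter_bihom hb (n+1)).2 (by omega))
      have hbn := (iter_bihom hb (n+1)).1
      have eNx : opNx m ((udx m)^[n+1] H)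
          = ((k : ℂ) - ((n : ℂ) + 1)) • (udx m)^[n+1] H := by
        have h : opNx m ((udx m)^[n+1] H)
            = (((k - (n+1)) : ℕ) : ℂ) • (udx m)^[n+1] H := euler_x hbn.1
        rw [h, Nat.cast_sub hn1k]
        push_cast
        ring_nf
      have eNu : opNu m ((udx m)^[n+1] H)
          = ((l : ℂ) + ((n : ℂ) + 1)) • (udx m)^[n+1] H := by
        have h : opNu m ((udx m)^[n+1] H)
            = (((l + (n+1)) : ℕ) : ℂ) • (udx m)^[n+1] H := euler_u hbn.2
        rw [h]
        push_cast
        ring_nf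
      rw [eNx, eNu, ← add_smul, ← sub_smul]
      congr 1
      push_cast
      ring

lemma van {p q : ℕ} {P : PP m} (hb : IsBihom m p q P) (hF : xdu m P = 0)
    (hpq : p < q) : P = 0 := by
  by_contra hne
  have hex : ∃ n, (udx m)^[n+1] P = 0 := ⟨p, (iter_bihom hb (p+1)).2 (by omega)⟩
  have hz : (udx m)^[Nat.find hex + 1] P = 0 := Nat.find_spec hex
  set n := Nat.find hex with hn
  have hnz : (udx m)^[n] P ≠ 0 := by
    rcases Nat.eq_zero_or_pos n with h | h
    · rw [h]; simpa using hne
    · obtain ⟨n', hn'⟩ : ∃ n', n = n' + 1 := ⟨n - 1, by omega⟩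
      rw [hn']
      exact Nat.find_min hex (by omega)
  have key := FEn hb hF n
  rw [hz, xdu_zero] at key
  have hc : ((n : ℂ) + 1) * ((p : ℂ) - (q : ℂ) - (n : ℂ)) ≠ 0 := by
    apply mul_ne_zero
    · exact Nat.cast_add_one_ne_zero n
    · intro h
      have h2 : ((p : ℕ) : ℂ) = ((q + n : ℕ) : ℂ) := by
        push_cast
        linear_combination h
      have := Nat.cast_inj (R := ℂ).mp h2
      omega
  rcases smul_eq_zero.mp key.symm with h | h
  · exact hc h
  · exact hnz h

lemma suIter_eq : ∀ (n : ℕ) (q : ℤ) (P : PP m), lapX m P = 0 → dudx m P = 0 →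
    SuIter m n q P = (udx m)^[n] P := by
  intro n
  induction n with
  | zero => intro q P _ _; simp [SuIter]
  | succ n ih =>
    intro q P h1 h2
    have hop : opSu m q P = udx m P := by
      unfold opSu
      rw [h2, mul_zero, smul_zero, sub_zero]
    show SuIter m n (q+1) (opSu m q P) = _
    rw [hop, ih (q+1) (udx m P) (by rw [comm_Lx_E, h1, udx_zero])
      (by rw [comm_A_E, h2, h1, udx_zero, add_zero]),
      ← Function.iterate_succ_apply]

lemma part1 {k l : ℕ} (hkl : l ≤ k) {H : PP m} (hs : IsSimp m k l H) :
    SuIter m (k - l + 1) (l : ℤ) H = 0 := by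
  obtain ⟨hb, h1, h2, h3, h4⟩ := hs
  rw [suIter_eq _ _ _ h1 h3]
  rcases Nat.eq_zero_or_pos l with rfl | hl
  · exact (iter_bihom hb (k - 0 + 1)).2 (by omega)
  · have hbv := (iter_bihom hb (k - l + 1)).1
    have e1 : k - (k - l + 1) = l - 1 := by omega
    have e2 : l + (k - l + 1) = k + 1 := by omega
    rw [e1, e2] at hbv
    have hFv : xdu m ((udx m)^[k - l + 1] H) = 0 := by
      have := FEn hb h4 (k - l)
      have hc : (k : ℂ) - (l : ℂ) - ((k - l : ℕ) : ℂ) = 0 := by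
        rw [Nat.cast_sub hkl]; ring
      rw [hc, mul_zero, zero_smul] at this
      exact this
    exact van hbv hFv (by omega)

section Part2

open Complex in
/-- generators -/
def pA (z0 z1 : Fin m) : PP m := X (Sum.inl z0) + C Complex.I * X (Sum.inl z1)
def pB (z2 z3 : Fin m) : PP m := X (Sum.inl z2) + C Complex.I * X (Sum.inl z3)
def pAl (z0 z1 : Fin m) : PP m := X (Sum.inr z0) + C Complex.I * X (Sum.inr z1)
def pBe (z2 z3 : Fin m) : PP m := X (Sum.inr z2) + C Complex.I * X (Sum.inr z3)
def pW (z0 z1 z2 z3 : Fin m) : PP m :=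
  pA z0 z1 * pBe z2 z3 - pB z2 z3 * pAl z0 z1

variable (z0 z1 z2 z3 : Fin m)

/-- "holomorphic in the two null planes" polynomials -/
def Hol (P : PP m) : Prop :=
  pderiv (Sum.inl z1) P = C Complex.I * pderiv (Sum.inl z0) P ∧
  pderiv (Sum.inl z3) P = C Complex.I * pderiv (Sum.inl z2) P ∧
  pderiv (Sum.inr z1) P = C Complex.I * pderiv (Sum.inr z0) P ∧
  pderiv (Sum.inr z3) P = C Complex.I * pderiv (Sum.inr z2) P ∧
  (∀ j : Fin m, j ∉ ({z0, z1, z2, z3} : Finset (Fin m)) →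
    pderiv (Sum.inl j) P = 0 ∧ pderiv (Sum.inr j) P = 0)

variable {z0 z1 z2 z3}

lemma hol_one : Hol z0 z1 z2 z3 (1 : PP m) := by
  refine ⟨by simp, by simp, by simp, by simp, fun j _ => ⟨by simp, by simp⟩⟩

lemma hol_mul {P Q : PP m} (hP : Hol z0 z1 z2 z3 P) (hQ : Hol z0 z1 z2 z3 Q) :
    Hol z0 z1 z2 z3 (P * Q) := by
  obtain ⟨p1, p2, p3, p4, p5⟩ := hP
  obtain ⟨q1, q2, q3, q4, q5⟩ := hQ
  refine ⟨?_, ?_, ?_, ?_, fun j hj => ?_⟩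
  · rw [pderiv_mul, pderiv_mul, p1, q1]; ring
  · rw [pderiv_mul, pderiv_mul, p2, q2]; ring
  · rw [pderiv_mul, pderiv_mul, p3, q3]; ring
  · rw [pderiv_mul, pderiv_mul, p4, q4]; ring
  · obtain ⟨a1, a2⟩ := p5 j hj
    obtain ⟨b1, b2⟩ := q5 j hj
    exact ⟨by rw [pderiv_mul, a1, b1]; ring, by rw [pderiv_mul, a2, b2]; ring⟩

lemma hol_pow {P : PP m} (hP : Hol z0 z1 z2 z3 P) (n : ℕ) :
    Hol z0 z1 z2 z3 (P ^ n) := by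
  induction n with
  | zero => simpa using hol_one
  | succ n ih => rw [pow_succ]; exact hol_mul ih hP

lemma hol_sub {P Q : PP m} (hP : Hol z0 z1 z2 z3 P) (hQ : Hol z0 z1 z2 z3 Q) :
    Hol z0 z1 z2 z3 (P - Q) := by
  obtain ⟨p1, p2, p3, p4, p5⟩ := hP
  obtain ⟨q1, q2, q3, q4, q5⟩ := hQ
  refine ⟨?_, ?_, ?_, ?_, fun j hj => ?_⟩
  · rw [map_sub, map_sub, p1, q1]; ring
  · rw [map_sub, map_sub, p2, q2]; ring
  · rw [map_sub, map_sub, p3, q3]; ring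
  · rw [map_sub, map_sub, p4, q4]; ring
  · obtain ⟨a1, a2⟩ := p5 j hj
    obtain ⟨b1, b2⟩ := q5 j hj
    exact ⟨by rw [map_sub, a1, b1]; ring, by rw [map_sub, a2, b2]; ring⟩

lemma hol_pderiv {P : PP m} (hP : Hol z0 z1 z2 z3 P) (s : Fin m ⊕ Fin m) :
    Hol z0 z1 z2 z3 (pderiv s P) := by
  obtain ⟨p1, p2, p3, p4, p5⟩ := hP
  refine ⟨?_, ?_, ?_, ?_, fun j hj => ?_⟩
  · rw [pd_comm, p1, pderiv_C_mul, pd_comm]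
  · rw [pd_comm, p2, pderiv_C_mul, pd_comm]
  · rw [pd_comm, p3, pderiv_C_mul, pd_comm]
  · rw [pd_comm, p4, pderiv_C_mul, pd_comm]
  · obtain ⟨a1, a2⟩ := p5 j hj
    exact ⟨by rw [pd_comm, a1, map_zero], by rw [pd_comm, a2, map_zero]⟩

lemma sum4 (h01 : z0 ≠ z1) (h02 : z0 ≠ z2) (h03 : z0 ≠ z3)
    (h12 : z1 ≠ z2) (h13 : z1 ≠ z3) (h23 : z2 ≠ z3) (f : Fin m → PP m)
    (hf : ∀ j, j ∉ ({z0, z1, z2, z3} : Finset (Fin m)) → f j = 0) :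
    ∑ j : Fin m, f j = f z0 + f z1 + f z2 + f z3 := by
  rw [← Finset.sum_subset (Finset.subset_univ ({z0, z1, z2, z3} : Finset (Fin m)))
    (fun j _ hj => hf j hj)]
  rw [Finset.sum_insert (by simp [h01, h02, h03]),
    Finset.sum_insert (by simp [h12, h13]),
    Finset.sum_insert (by simp [h23]), Finset.sum_singleton]
  ring

variable (h01 : z0 ≠ z1) (h02 : z0 ≠ z2) (h03 : z0 ≠ z3)
variable (h12 : z1 ≠ z2) (h13 : z1 ≠ z3) (h23 : z2 ≠ z3)

lemma CII (Q : PP m) : C Complex.I * (C Complex.I * Q) = -Q := by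
  rw [← mul_assoc, ← C_mul, Complex.I_mul_I]
  simp

include h01 h02 h03 h12 h13 h23

lemma lapX_hol {P : PP m} (hP : Hol z0 z1 z2 z3 P) : lapX m P = 0 := by
  obtain ⟨p1, p2, p3, p4, p5⟩ := hP
  unfold lapX
  rw [sum4 h01 h02 h03 h12 h13 h23 _ (fun j hj => by rw [(p5 j hj).1, map_zero])]
  have e1 : pderiv (Sum.inl z1) (pderiv (Sum.inl z1) P)
      = C Complex.I * (C Complex.I * pderiv (Sum.inl z0) (pderiv (Sum.inl z0) P)) := by
    rw [p1, pderiv_C_mul, pd_comm, p1, pderiv_C_mul]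
  have e2 : pderiv (Sum.inl z3) (pderiv (Sum.inl z3) P)
      = C Complex.I * (C Complex.I * pderiv (Sum.inl z2) (pderiv (Sum.inl z2) P)) := by
    rw [p2, pderiv_C_mul, pd_comm, p2, pderiv_C_mul]
  rw [e1, e2, CII, CII]
  ring

lemma lapU_hol {P : PP m} (hP : Hol z0 z1 z2 z3 P) : lapU m P = 0 := by
  obtain ⟨p1, p2, p3, p4, p5⟩ := hP
  unfold lapU
  rw [sum4 h01 h02 h03 h12 h13 h23 _ (fun j hj => by rw [(p5 j hj).2, map_zero])]
  have e1 : pderiv (Sum.inr z1) (pderiv (Sum.inr z1) P)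
      = C Complex.I * (C Complex.I * pderiv (Sum.inr z0) (pderiv (Sum.inr z0) P)) := by
    rw [p3, pderiv_C_mul, pd_comm, p3, pderiv_C_mul]
  have e2 : pderiv (Sum.inr z3) (pderiv (Sum.inr z3) P)
      = C Complex.I * (C Complex.I * pderiv (Sum.inr z2) (pderiv (Sum.inr z2) P)) := by
    rw [p4, pderiv_C_mul, pd_comm, p4, pderiv_C_mul]
  rw [e1, e2, CII, CII]
  ring

lemma dudx_hol {P : PP m} (hP : Hol z0 z1 z2 z3 P) : dudx m P = 0 := by
  have hP' := hP
  obtain ⟨p1, p2, p3, p4, p5⟩ := hP'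
  unfold dudx
  rw [sum4 h01 h02 h03 h12 h13 h23 _ (fun j hj => by rw [(p5 j hj).1, map_zero])]
  have e1 : pderiv (Sum.inr z1) (pderiv (Sum.inl z1) P)
      = C Complex.I * (C Complex.I * pderiv (Sum.inr z0) (pderiv (Sum.inl z0) P)) := by
    rw [p1, pderiv_C_mul, (hol_pderiv hP (Sum.inl z0)).2.2.1]
  have e2 : pderiv (Sum.inr z3) (pderiv (Sum.inl z3) P)
      = C Complex.I * (C Complex.I * pderiv (Sum.inr z2) (pderiv (Sum.inl z2) P)) := by
    rw [p2, pderiv_C_mul, (hol_pderiv hP (Sum.inl z2)).2.2.2.1]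
  rw [e1, e2, CII, CII]
  ring

lemma xdu_hol {P : PP m} (hP : Hol z0 z1 z2 z3 P) :
    xdu m P = pA z0 z1 * pderiv (Sum.inr z0) P + pB z2 z3 * pderiv (Sum.inr z2) P := by
  obtain ⟨p1, p2, p3, p4, p5⟩ := hP
  unfold xdu
  rw [sum4 h01 h02 h03 h12 h13 h23 _ (fun j hj => by rw [(p5 j hj).2, mul_zero])]
  rw [p3, p4]
  unfold pA pB
  ring

lemma udx_hol {P : PP m} (hP : Hol z0 z1 z2 z3 P) :
    udx m P = pAl z0 z1 * pderiv (Sum.inl z0) P + pBe z2 z3 * pderiv (Sum.inl z2) P := by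
  obtain ⟨p1, p2, p3, p4, p5⟩ := hP
  unfold udx
  rw [sum4 h01 h02 h03 h12 h13 h23 _ (fun j hj => by rw [(p5 j hj).1, mul_zero])]
  rw [p1, p2]
  unfold pAl pBe
  ring

omit h01 h02 h03 h12 h13 h23

lemma pdX_inl_ne {i j : Fin m} (h : j ≠ i) :
    pderiv (Sum.inl i) (X (Sum.inl j) : PP m) = 0 := pderiv_X_of_ne (by simp [h])
lemma pdX_inr_ne {i j : Fin m} (h : j ≠ i) :
    pderiv (Sum.inr i) (X (Sum.inr j) : PP m) = 0 := pderiv_X_of_ne (by simp [h])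

lemma dA_u (i : Fin m) : pderiv (Sum.inr i) (pA z0 z1) = 0 := by
  unfold pA; rw [map_add, pderiv_C_mul, pd_inr_X_inl, pd_inr_X_inl]; simp
lemma dB_u (i : Fin m) : pderiv (Sum.inr i) (pB z2 z3) = 0 := by
  unfold pB; rw [map_add, pderiv_C_mul, pd_inr_X_inl, pd_inr_X_inl]; simp
lemma dAl_x (i : Fin m) : pderiv (Sum.inl i) (pAl z0 z1) = 0 := by
  unfold pAl; rw [map_add, pderiv_C_mul, pd_inl_X_inr, pd_inl_X_inr]; simp
lemma dBe_x (i : Fin m) : pderiv (Sum.inl i) (pBe z2 z3) = 0 := by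
  unfold pBe; rw [map_add, pderiv_C_mul, pd_inl_X_inr, pd_inl_X_inr]; simp

include h01 in
lemma dA_x0 : pderiv (Sum.inl z0) (pA z0 z1) = 1 := by
  unfold pA; rw [map_add, pderiv_C_mul, pderiv_X_self, pdX_inl_ne h01.symm]; simp
include h02 h12 in
lemma dA_x2 : pderiv (Sum.inl z2) (pA z0 z1) = 0 := by
  unfold pA; rw [map_add, pderiv_C_mul, pdX_inl_ne h02, pdX_inl_ne h12]; simp
include h02 h03 in
lemma dB_x0 : pderiv (Sum.inl z0) (pB z2 z3) = 0 := by
  unfold pB; rw [map_add, pderiv_C_mul, pdX_inl_ne h02.symm, pdX_inl_ne h03.symm]; simp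
include h23 in
lemma dB_x2 : pderiv (Sum.inl z2) (pB z2 z3) = 1 := by
  unfold pB; rw [map_add, pderiv_C_mul, pderiv_X_self, pdX_inl_ne h23.symm]; simp
include h01 in
lemma dAl_u0 : pderiv (Sum.inr z0) (pAl z0 z1) = 1 := by
  unfold pAl; rw [map_add, pderiv_C_mul, pderiv_X_self, pdX_inr_ne h01.symm]; simp
include h02 h12 in
lemma dAl_u2 : pderiv (Sum.inr z2) (pAl z0 z1) = 0 := by
  unfold pAl; rw [map_add, pderiv_C_mul, pdX_inr_ne h02, pdX_inr_ne h12]; simp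
include h02 h03 in
lemma dBe_u0 : pderiv (Sum.inr z0) (pBe z2 z3) = 0 := by
  unfold pBe; rw [map_add, pderiv_C_mul, pdX_inr_ne h02.symm, pdX_inr_ne h03.symm]; simp
include h23 in
lemma dBe_u2 : pderiv (Sum.inr z2) (pBe z2 z3) = 1 := by
  unfold pBe; rw [map_add, pderiv_C_mul, pderiv_X_self, pdX_inr_ne h23.symm]; simp

include h01 h02 h03 h12 h13 h23

lemma dW_x0 : pderiv (Sum.inl z0) (pW z0 z1 z2 z3) = pBe z2 z3 := by
  unfold pW
  rw [map_sub, pderiv_mul, pderiv_mul, dA_x0 h01, dBe_x, dB_x0 h02 h03, dAl_x]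
  ring
lemma dW_x2 : pderiv (Sum.inl z2) (pW z0 z1 z2 z3) = -(pAl z0 z1) := by
  unfold pW
  rw [map_sub, pderiv_mul, pderiv_mul, dA_x2 h02 h12, dBe_x, dB_x2 h23, dAl_x]
  ring
lemma dW_u0 : pderiv (Sum.inr z0) (pW z0 z1 z2 z3) = -(pB z2 z3) := by
  unfold pW
  rw [map_sub, pderiv_mul, pderiv_mul, dA_u, dBe_u0 h02 h03, dB_u, dAl_u0 h01]
  ring
lemma dW_u2 : pderiv (Sum.inr z2) (pW z0 z1 z2 z3) = pA z0 z1 := by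
  unfold pW
  rw [map_sub, pderiv_mul, pderiv_mul, dA_u, dBe_u2 h23, dB_u, dAl_u2 h02 h12]
  ring

omit h02 h03 h12 h13 h23 in
lemma dA_x1 : pderiv (Sum.inl z1) (pA z0 z1) = C Complex.I := by
  unfold pA; rw [map_add, pderiv_C_mul, pdX_inl_ne h01, pderiv_X_self]; simp
omit h01 h02 h12 h23 in
lemma dA_x3 : pderiv (Sum.inl z3) (pA z0 z1) = 0 := by
  unfold pA; rw [map_add, pderiv_C_mul, pdX_inl_ne h03, pdX_inl_ne h13]; simp
omit h01 h02 h03 h23 in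
lemma dB_x1 : pderiv (Sum.inl z1) (pB z2 z3) = 0 := by
  unfold pB; rw [map_add, pderiv_C_mul, pdX_inl_ne h12.symm, pdX_inl_ne h13.symm]; simp
omit h01 h02 h03 h12 h13 in
lemma dB_x3 : pderiv (Sum.inl z3) (pB z2 z3) = C Complex.I := by
  unfold pB; rw [map_add, pderiv_C_mul, pdX_inl_ne h23, pderiv_X_self]; simp
omit h02 h03 h12 h13 h23 in
lemma dAl_u1 : pderiv (Sum.inr z1) (pAl z0 z1) = C Complex.I := by
  unfold pAl; rw [map_add, pderiv_C_mul, pdX_inr_ne h01, pderiv_X_self]; simp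
omit h01 h02 h12 h23 in
lemma dAl_u3 : pderiv (Sum.inr z3) (pAl z0 z1) = 0 := by
  unfold pAl; rw [map_add, pderiv_C_mul, pdX_inr_ne h03, pdX_inr_ne h13]; simp
omit h01 h02 h03 h23 in
lemma dBe_u1 : pderiv (Sum.inr z1) (pBe z2 z3) = 0 := by
  unfold pBe; rw [map_add, pderiv_C_mul, pdX_inr_ne h12.symm, pdX_inr_ne h13.symm]; simp
omit h01 h02 h03 h12 h13 in
lemma dBe_u3 : pderiv (Sum.inr z3) (pBe z2 z3) = C Complex.I := by
  unfold pBe; rw [map_add, pderiv_C_mul, pdX_inr_ne h23, pderiv_X_self]; simp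

lemma hol_pA : Hol z0 z1 z2 z3 (pA z0 z1) := by
  refine ⟨?_, ?_, ?_, ?_, fun j hj => ?_⟩
  · rw [dA_x1 h01, dA_x0 h01, mul_one]
  · rw [dA_x3 h03 h13, dA_x2 h02 h12, mul_zero]
  · rw [dA_u, dA_u, mul_zero]
  · rw [dA_u, dA_u, mul_zero]
  · simp only [Finset.mem_insert, Finset.mem_singleton, not_or] at hj
    obtain ⟨hj0, hj1, _, _⟩ := hj
    refine ⟨?_, dA_u j⟩
    unfold pA
    rw [map_add, pderiv_C_mul, pdX_inl_ne (Ne.symm hj0), pdX_inl_ne (Ne.symm hj1)]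
    simp

lemma hol_pB : Hol z0 z1 z2 z3 (pB z2 z3) := by
  refine ⟨?_, ?_, ?_, ?_, fun j hj => ?_⟩
  · rw [dB_x1 h12 h13, dB_x0 h02 h03, mul_zero]
  · rw [dB_x3 h23, dB_x2 h23, mul_one]
  · rw [dB_u, dB_u, mul_zero]
  · rw [dB_u, dB_u, mul_zero]
  · simp only [Finset.mem_insert, Finset.mem_singleton, not_or] at hj
    obtain ⟨_, _, hj2, hj3⟩ := hj
    refine ⟨?_, dB_u j⟩
    unfold pB
    rw [map_add, pderiv_C_mul, pdX_inl_ne (Ne.symm hj2), pdX_inl_ne (Ne.symm hj3)]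
    simp

lemma hol_pAl : Hol z0 z1 z2 z3 (pAl z0 z1) := by
  refine ⟨?_, ?_, ?_, ?_, fun j hj => ?_⟩
  · rw [dAl_x, dAl_x, mul_zero]
  · rw [dAl_x, dAl_x, mul_zero]
  · rw [dAl_u1 h01, dAl_u0 h01, mul_one]
  · rw [dAl_u3 h03 h13, dAl_u2 h02 h12, mul_zero]
  · simp only [Finset.mem_insert, Finset.mem_singleton, not_or] at hj
    obtain ⟨hj0, hj1, _, _⟩ := hj
    refine ⟨dAl_x j, ?_⟩
    unfold pAl
    rw [map_add, pderiv_C_mul, pdX_inr_ne (Ne.symm hj0), pdX_inr_ne (Ne.symm hj1)]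
    simp

lemma hol_pBe : Hol z0 z1 z2 z3 (pBe z2 z3) := by
  refine ⟨?_, ?_, ?_, ?_, fun j hj => ?_⟩
  · rw [dBe_x, dBe_x, mul_zero]
  · rw [dBe_x, dBe_x, mul_zero]
  · rw [dBe_u1 h12 h13, dBe_u0 h02 h03, mul_zero]
  · rw [dBe_u3 h23, dBe_u2 h23, mul_one]
  · simp only [Finset.mem_insert, Finset.mem_singleton, not_or] at hj
    obtain ⟨_, _, hj2, hj3⟩ := hj
    refine ⟨dBe_x j, ?_⟩
    unfold pBe
    rw [map_add, pderiv_C_mul, pdX_inr_ne (Ne.symm hj2), pdX_inr_ne (Ne.symm hj3)]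
    simp

lemma hol_pW : Hol z0 z1 z2 z3 (pW z0 z1 z2 z3) := by
  unfold pW
  exact hol_sub (hol_mul (hol_pA h01 h02 h03 h12 h13 h23) (hol_pBe h01 h02 h03 h12 h13 h23))
    (hol_mul (hol_pB h01 h02 h03 h12 h13 h23) (hol_pAl h01 h02 h03 h12 h13 h23))

lemma hol_wit (s t l' : ℕ) :
    Hol z0 z1 z2 z3 (pAl z0 z1 ^ s * (pA z0 z1 ^ t * pW z0 z1 z2 z3 ^ l')) :=
  hol_mul (hol_pow (hol_pAl h01 h02 h03 h12 h13 h23) s)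
    (hol_mul (hol_pow (hol_pA h01 h02 h03 h12 h13 h23) t)
      (hol_pow (hol_pW h01 h02 h03 h12 h13 h23) l'))

lemma Estep (s t l' : ℕ) :
    udx m (pAl z0 z1 ^ s * (pA z0 z1 ^ (t+1) * pW z0 z1 z2 z3 ^ l'))
      = ((t : ℂ) + 1) • (pAl z0 z1 ^ (s+1) * (pA z0 z1 ^ t * pW z0 z1 z2 z3 ^ l')) := by
  rw [udx_hol h01 h02 h03 h12 h13 h23 (hol_wit h01 h02 h03 h12 h13 h23 s (t+1) l')]
  simp only [pderiv_mul, pderiv_pow, dAl_x, dA_x0 h01, dA_x2 h02 h12,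
    dW_x0 h01 h02 h03 h12 h13 h23, dW_x2 h01 h02 h03 h12 h13 h23,
    Nat.add_sub_cancel, mul_zero, zero_mul, add_zero, zero_add, mul_one]
  rw [smul_eq_C_mul, ← map_natCast (C : ℂ →+* PP m) (t+1), Nat.cast_add, Nat.cast_one]
  push_cast
  ring

lemma iterE (d l' : ℕ) : ∀ j, j ≤ d →
    (udx m)^[j] (pA z0 z1 ^ d * pW z0 z1 z2 z3 ^ l')
      = (∏ i ∈ Finset.range j, ((d : ℂ) - (i : ℂ)))
          • (pAl z0 z1 ^ j * (pA z0 z1 ^ (d - j) * pW z0 z1 z2 z3 ^ l')) := by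
  intro j
  induction j with
  | zero => intro _; simp
  | succ j ih =>
    intro hj
    rw [Function.iterate_succ_apply', ih (by omega), udx_smul]
    have ht : d - j = (d - (j + 1)) + 1 := by omega
    rw [ht, Estep h01 h02 h03 h12 h13 h23, smul_smul, Finset.prod_range_succ]
    congr 1
    rw [Nat.cast_sub (by omega : j + 1 ≤ d)]
    push_cast
    ring

/-- evaluation point -/
def ptv (w0 w2 : Fin m) : Fin m ⊕ Fin m → ℂ :=
  Sum.elim (fun i => if i = w0 then 1 else 0)
    (fun i => if i = w0 then 1 else if i = w2 then 1 else 0)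

omit h13 in
lemma eval_wit (s t l' : ℕ) :
    eval (ptv z0 z2) (pAl z0 z1 ^ s * (pA z0 z1 ^ t * pW z0 z1 z2 z3 ^ l')) = 1 := by
  have eA : eval (ptv z0 z2) (pA z0 z1) = 1 := by
    simp [pA, ptv, h01.symm]
  have eB : eval (ptv z0 z2) (pB z2 z3) = 0 := by
    simp [pB, ptv, h02.symm, h03.symm]
  have eAl : eval (ptv z0 z2) (pAl z0 z1) = 1 := by
    simp [pAl, ptv, h01.symm, h12]
  have eBe : eval (ptv z0 z2) (pBe z2 z3) = 1 := by
    simp [pBe, ptv, h02.symm, h03.symm, h23.symm]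
  have eW : eval (ptv z0 z2) (pW z0 z1 z2 z3) = 1 := by
    simp [pW, eA, eB, eAl, eBe]
  simp [eA, eW, eAl]

omit h13 in
lemma wit_ne_zero (s t l' : ℕ) :
    pAl z0 z1 ^ s * (pA z0 z1 ^ t * pW z0 z1 z2 z3 ^ l') ≠ 0 := by
  intro h
  have h2 := eval_wit h01 h02 h03 h12 h23 s t l'
  rw [h] at h2
  simp at h2

omit h01 h02 h03 h12 h13 h23

lemma hom_pow {w : Fin m ⊕ Fin m → ℕ} {n : ℕ} {f : PP m}
    (h : f.IsWeightedHomogeneous w n) (t : ℕ) :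
    (f ^ t).IsWeightedHomogeneous w (t * n) := by
  induction t with
  | zero => simpa using isWeightedHomogeneous_one ℂ w
  | succ t ih =>
    rw [pow_succ]
    have := ih.mul h
    rwa [show t * n + n = (t+1) * n by ring] at this

lemma hom_pair (w : Fin m ⊕ Fin m → ℕ) (s t : Fin m ⊕ Fin m) (n : ℕ)
    (hs : w s = n) (ht : w t = n) :
    IsWeightedHomogeneous w (X s + C Complex.I * X t : PP m) n := by
  have hxs : IsWeightedHomogeneous w (X s : PP m) n := hs ▸ isWeightedHomogeneous_X ℂ w s
  have hxt : IsWeightedHomogeneous w (X t : PP m) n := ht ▸ isWeightedHomogeneous_X ℂ w t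
  rw [C_mul']
  exact hxs.add ((weightedHomogeneousSubmodule ℂ w n).smul_mem _ hxt)

lemma homX_pA : (pA z0 z1).IsWeightedHomogeneous (wX m) 1 := hom_pair _ _ _ 1 rfl rfl
lemma homU_pA : (pA z0 z1).IsWeightedHomogeneous (wU m) 0 := hom_pair _ _ _ 0 rfl rfl
lemma homX_pB : (pB z2 z3).IsWeightedHomogeneous (wX m) 1 := hom_pair _ _ _ 1 rfl rfl
lemma homU_pB : (pB z2 z3).IsWeightedHomogeneous (wU m) 0 := hom_pair _ _ _ 0 rfl rfl
lemma homX_pAl : (pAl z0 z1).IsWeightedHomogeneous (wX m) 0 := hom_pair _ _ _ 0 rfl rfl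
lemma homU_pAl : (pAl z0 z1).IsWeightedHomogeneous (wU m) 1 := hom_pair _ _ _ 1 rfl rfl
lemma homX_pBe : (pBe z2 z3).IsWeightedHomogeneous (wX m) 0 := hom_pair _ _ _ 0 rfl rfl
lemma homU_pBe : (pBe z2 z3).IsWeightedHomogeneous (wU m) 1 := hom_pair _ _ _ 1 rfl rfl

lemma homX_pW : (pW z0 z1 z2 z3).IsWeightedHomogeneous (wX m) 1 := by
  unfold pW
  have h1 : ((pA z0 z1) * (pBe z2 z3)).IsWeightedHomogeneous (wX m) 1 := by
    simpa using homX_pA.mul homX_pBe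
  have h2 : ((pB z2 z3) * (pAl z0 z1)).IsWeightedHomogeneous (wX m) 1 := by
    simpa using homX_pB.mul homX_pAl
  exact (weightedHomogeneousSubmodule ℂ (wX m) 1).sub_mem h1 h2

lemma homU_pW : (pW z0 z1 z2 z3).IsWeightedHomogeneous (wU m) 1 := by
  unfold pW
  have h1 : ((pA z0 z1) * (pBe z2 z3)).IsWeightedHomogeneous (wU m) 1 := by
    simpa using homU_pA.mul homU_pBe
  have h2 : ((pB z2 z3) * (pAl z0 z1)).IsWeightedHomogeneous (wU m) 1 := by
    simpa using homU_pB.mul homU_pAl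
  exact (weightedHomogeneousSubmodule ℂ (wU m) 1).sub_mem h1 h2

lemma bihom_wit {k l : ℕ} (hkl : l ≤ k) :
    IsBihom m k l (pA z0 z1 ^ (k - l) * pW z0 z1 z2 z3 ^ l) := by
  constructor
  · have := (hom_pow (homX_pA (z0 := z0) (z1 := z1)) (k - l)).mul
      (hom_pow (homX_pW (z0 := z0) (z1 := z1) (z2 := z2) (z3 := z3)) l)
    rwa [show (k-l) * 1 + l * 1 = k by omega] at this
  · have := (hom_pow (homU_pA (z0 := z0) (z1 := z1)) (k - l)).mul
      (hom_pow (homU_pW (z0 := z0) (z1 := z1) (z2 := z2) (z3 := z3)) l)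
    rwa [show (k-l) * 0 + l * 1 = l by omega] at this

include h01 h02 h03 h12 h13 h23

lemma xdu_wit (t l' : ℕ) :
    xdu m (pA z0 z1 ^ t * pW z0 z1 z2 z3 ^ l') = 0 := by
  have h : pA z0 z1 ^ t * pW z0 z1 z2 z3 ^ l'
      = pAl z0 z1 ^ 0 * (pA z0 z1 ^ t * pW z0 z1 z2 z3 ^ l') := by
    rw [pow_zero, one_mul]
  rw [h, xdu_hol h01 h02 h03 h12 h13 h23 (hol_wit h01 h02 h03 h12 h13 h23 0 t l')]
  simp only [pderiv_mul, pderiv_pow, dA_u, dB_u, dAl_u0 h01, dAl_u2 h02 h12,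
    dW_u0 h01 h02 h03 h12 h13 h23, dW_u2 h01 h02 h03 h12 h13 h23,
    pow_zero, mul_zero, zero_mul, add_zero, zero_add, mul_one, one_mul]
  ring

lemma part2 (k l : ℕ) (hkl : l ≤ k) (j : ℕ) (hj : j ≤ k - l) :
    ∃ H : PP m, IsSimp m k l H ∧ SuIter m j (l : ℤ) H ≠ 0 := by
  set H := pA z0 z1 ^ (k - l) * pW z0 z1 z2 z3 ^ l with hH
  have hhol : Hol z0 z1 z2 z3 H := by
    have h := hol_wit h01 h02 h03 h12 h13 h23 0 (k - l) l
    rwa [pow_zero, one_mul] at h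
  have hlapX : lapX m H = 0 := lapX_hol h01 h02 h03 h12 h13 h23 hhol
  have hdudx : dudx m H = 0 := dudx_hol h01 h02 h03 h12 h13 h23 hhol
  refine ⟨H, ⟨bihom_wit hkl, hlapX, lapU_hol h01 h02 h03 h12 h13 h23 hhol, hdudx,
    xdu_wit h01 h02 h03 h12 h13 h23 (k - l) l⟩, ?_⟩
  rw [suIter_eq j (l : ℤ) H hlapX hdudx]
  rw [hH, iterE h01 h02 h03 h12 h13 h23 (k - l) l j hj]
  apply smul_ne_zero
  · rw [Finset.prod_ne_zero_iff]
    intro i hi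
    rw [Finset.mem_range] at hi
    intro hc
    have : (((k - l : ℕ)) : ℂ) = ((i : ℕ) : ℂ) := by linear_combination hc
    have := Nat.cast_inj (R := ℂ).mp this
    omega
  · exact wit_ne_zero h01 h02 h03 h12 h23 _ _ _

end Part2
end Aux

/-- `S_u^{k−l+1}` annihilates the simplicial harmonics `ℋ_{k,l}`,
while `S_u^j` is non-trivial on `ℋ_{k,l}` for all `j ≤ k − l`. -/
theorem stmt_6 (m k l : ℕ) (hm : 4 < m) (hkl : l ≤ k) :
    (∀ H : PP m, IsSimp m k l H → SuIter m (k - l + 1) (l : ℤ) H = 0) ∧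
    (∀ j : ℕ, j ≤ k - l → ∃ H : PP m, IsSimp m k l H ∧ SuIter m j (l : ℤ) H ≠ 0) := by
  constructor
  · intro H hs
    exact Aux.part1 hkl hs
  · intro j hj
    exact Aux.part2 (z0 := ⟨0, by omega⟩) (z1 := ⟨1, by omega⟩)
      (z2 := ⟨2, by omega⟩) (z3 := ⟨3, by omega⟩)
      (by simp [Fin.ext_iff]) (by simp [Fin.ext_iff]) (by simp [Fin.ext_iff])
      (by simp [Fin.ext_iff]) (by simp [Fin.ext_iff]) (by simp [Fin.ext_iff])
      k l hkl j hj
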